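/- For any two rooted binary phylogenetic trees T¹ and T² on the same leaf set [n], the Krull dimensions of the quotient rings R/I_{T¹} and R/I_{T²} are equal; that is, the dimension of the CFN-MC toric variety depends only on the number of leaves n and not on the topology of the tree. -/

import Mathlib

/-- Rooted binary trees with leaves labeled by natural numbers. -/
inductive PhyloTree where
  | leaf : ℕ → PhyloTree
  | node : PhyloTree → PhyloTree → PhyloTree
deriving DecidableEq

namespace PhyloTree

/-- The set of leaf labels of a tree. -/
def leaves : PhyloTree → Finset ℕ
  | leaf i => {i}
  | node l r => leaves l ∪ leaves r

/-- The list of leaf labels (left-to-right). -/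
def leafList : PhyloTree → List ℕ
  | leaf i => [i]
  | node l r => leafList l ++ leafList r

/-- `t` is a rooted binary phylogenetic tree on leaf set `[n] = {0, …, n-1}`:
its leaves are bijectively labeled by `{0, …, n-1}`. -/
def IsPhylo (n : ℕ) (t : PhyloTree) : Prop :=
  t.leafList.Nodup ∧ t.leafList.toFinset = Finset.range n

/-- The subtrees of `t`; these are identified with the vertices of `t`. -/
def subtrees : PhyloTree → Finset PhyloTree
  | leaf i => {leaf i}
  | node l r => insert (node l r) (subtrees l ∪ subtrees r)

/-- Whether the root of the tree is an internal (non-leaf) vertex. -/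
def isInternal : PhyloTree → Bool
  | leaf _ => false
  | node _ _ => true

/-- The internal vertices of `t`, identified with the subtrees rooted at them. -/
def internalVertices (t : PhyloTree) : Finset PhyloTree :=
  t.subtrees.filter (fun s => s.isInternal)

/-- The most recent common ancestor of the leaves labeled `i` and `j`,
identified with the subtree rooted at it. -/
def mrca (t : PhyloTree) (i j : ℕ) : PhyloTree :=
  match t with
  | leaf a => leaf a
  | node l r =>
    if i ∈ l.leaves ∧ j ∈ l.leaves then mrca l i j
    else if i ∈ r.leaves ∧ j ∈ r.leaves then mrca r i j
    else node l r

/-- The most recent common ancestor of a set `p` of leaf labels. -/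
def mrcaSet (t : PhyloTree) (p : Finset ℕ) : PhyloTree :=
  match t with
  | leaf a => leaf a
  | node l r =>
    if p ⊆ l.leaves then mrcaSet l p
    else if p ⊆ r.leaves then mrcaSet r p
    else node l r

/-- A vertex (= subtree) is a top-most node of a path in the system of disjoint
paths `𝔓(x)` iff an odd number of elements of `x` lies below each of its two
children. -/
def isTopOf (x : Finset ℕ) : PhyloTree → Bool
  | leaf _ => false
  | node l r => decide (Odd (x ∩ l.leaves).card) && decide (Odd (x ∩ r.leaves).card)

/-- `top(x)`: the set of top-most nodes of the paths in the system `𝔓(x)` of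
pairwise disjoint paths joining the leaves in `x`. -/
def topSet (t : PhyloTree) (x : Finset ℕ) : Finset PhyloTree :=
  t.subtrees.filter (fun s => isTopOf x s)

/-- The vertices of the path in `t` between the leaves of the pair `p` (more
generally, the vertices of the smallest subtree of `t` spanning `p`). -/
def pathSet (t : PhyloTree) (p : Finset ℕ) : Finset PhyloTree :=
  (mrcaSet t p).subtrees.filter (fun s => ∃ ℓ ∈ p, ℓ ∈ s.leaves)

/-- `u` is a strict descendant of `w`. -/
def IsStrictDescendant (u w : PhyloTree) : Prop :=
  u ≠ w ∧ u ∈ w.subtrees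

end PhyloTree

/-- `ℤ₂ⁿ`-vectors with an even number of ones, encoded as even-size subsets of `Fin n`. -/
abbrev EvenSubsets (n : ℕ) := {x : Finset (Fin n) // Even x.card}

/-- Forget the bound `n`, regarding a set of coordinates as a set of leaf labels. -/
def EvenSubsets.toNat {n : ℕ} (x : EvenSubsets n) : Finset ℕ := x.1.image Fin.val

/-- The vector `1_{i,j}` with ones exactly in positions `i ≠ j`. -/
def pairIdx {n : ℕ} (i j : Fin n) (h : i ≠ j) : EvenSubsets n :=
  ⟨{i, j}, by rw [Finset.card_pair h]; exact ⟨1, rfl⟩⟩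

open MvPolynomial in
/-- The monomial map `φ_T : ℂ[q_x] → ℂ[b₀, b_v]`, `q_x ↦ b₀ ∏_{v ∈ top(x)} b_v`. -/
noncomputable def phiCFNMC (n : ℕ) (t : PhyloTree) :
    MvPolynomial (EvenSubsets n) ℂ →ₐ[ℂ] MvPolynomial (Option PhyloTree) ℂ :=
  aeval (fun x => X none * ∏ s ∈ t.topSet x.toNat, X (some s))

/-- The CFN-MC ideal `I_T = ker φ_T`. -/
noncomputable def cfnIdeal (n : ℕ) (t : PhyloTree) : Ideal (MvPolynomial (EvenSubsets n) ℂ) :=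
  RingHom.ker (phiCFNMC n t)

namespace PhyloTree

lemma leafList_ne_nil (t : PhyloTree) : t.leafList ≠ [] := by
  induction t with
  | leaf i => simp [leafList]
  | node l r ihl ihr => simp [leafList, ihl]

lemma leaves_eq_toFinset (t : PhyloTree) : t.leaves = t.leafList.toFinset := by
  induction t with
  | leaf i => simp [leaves, leafList]
  | node l r ihl ihr => simp [leaves, leafList, ihl, ihr]

lemma leaves_nonempty (t : PhyloTree) : t.leaves.Nonempty := by
  rw [leaves_eq_toFinset]
  obtain ⟨a, ha⟩ := List.exists_mem_of_ne_nil _ (leafList_ne_nil t)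
  exact ⟨a, List.mem_toFinset.mpr ha⟩

lemma self_mem_subtrees (t : PhyloTree) : t ∈ t.subtrees := by
  cases t with
  | leaf i => simp [subtrees]
  | node l r => simp [subtrees]

lemma leafList_sublist_of_mem_subtrees {s t : PhyloTree} (h : s ∈ t.subtrees) :
    s.leafList.Sublist t.leafList := by
  induction t with
  | leaf i =>
    simp [subtrees] at h
    subst h
    exact List.Sublist.refl _
  | node l r ihl ihr =>
    rw [subtrees, Finset.mem_insert, Finset.mem_union] at h
    rcases h with rfl | h | h
    · exact List.Sublist.refl _
    · exact (ihl h).trans (List.sublist_append_left _ _)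
    · exact (ihr h).trans (List.sublist_append_right _ _)

lemma leaves_subset_of_mem_subtrees {s t : PhyloTree} (h : s ∈ t.subtrees) :
    s.leaves ⊆ t.leaves := by
  rw [leaves_eq_toFinset, leaves_eq_toFinset]
  intro a ha
  rw [List.mem_toFinset] at *
  exact (leafList_sublist_of_mem_subtrees h).subset ha

lemma nodup_of_mem_subtrees {s t : PhyloTree} (hnd : t.leafList.Nodup)
    (h : s ∈ t.subtrees) : s.leafList.Nodup :=
  (leafList_sublist_of_mem_subtrees h).nodup hnd

lemma disjoint_leaves_of_nodup {l r : PhyloTree} (h : (node l r).leafList.Nodup) :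
    Disjoint l.leaves r.leaves := by
  rw [leafList, List.nodup_append] at h
  rw [leaves_eq_toFinset, leaves_eq_toFinset]
  exact List.disjoint_toFinset_iff_disjoint.mpr (fun a ha hb => h.2.2 a ha a hb rfl)

lemma not_mem_subtrees_left {l r : PhyloTree} : node l r ∉ l.subtrees := by
  intro h
  have := (leafList_sublist_of_mem_subtrees h).length_le
  rw [leafList, List.length_append] at this
  have := List.length_pos_iff.mpr (leafList_ne_nil r)
  omega

lemma not_mem_subtrees_right {l r : PhyloTree} : node l r ∉ r.subtrees := by
  intro h
  have := (leafList_sublist_of_mem_subtrees h).length_le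
  rw [leafList, List.length_append] at this
  have := List.length_pos_iff.mpr (leafList_ne_nil l)
  omega

lemma laminar : ∀ (t : PhyloTree), t.leafList.Nodup → ∀ s ∈ t.subtrees, ∀ s' ∈ t.subtrees,
    (s.leaves ∩ s'.leaves).Nonempty → s ∈ s'.subtrees ∨ s' ∈ s.subtrees := by
  intro t
  induction t with
  | leaf i =>
    intro _ s hs s' hs' _
    simp only [subtrees, Finset.mem_singleton] at hs hs'
    subst hs; subst hs'
    exact Or.inl (self_mem_subtrees _)
  | node l r ihl ihr =>
    intro hnd s hs s' hs' hint
    have hndl : l.leafList.Nodup := by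
      rw [leafList, List.nodup_append] at hnd; exact hnd.1
    have hndr : r.leafList.Nodup := by
      rw [leafList, List.nodup_append] at hnd; exact hnd.2.1
    have hdisj := disjoint_leaves_of_nodup hnd
    rw [subtrees, Finset.mem_insert, Finset.mem_union] at hs hs'
    rcases hs with rfl | hs
    · rcases hs' with rfl | hs'
      · exact Or.inl (self_mem_subtrees _)
      · right
        rw [subtrees, Finset.mem_insert, Finset.mem_union]
        exact Or.inr hs'
    · rcases hs' with rfl | hs'
      · left
        rw [subtrees, Finset.mem_insert, Finset.mem_union]
        exact Or.inr hs
      · rcases hs with hs | hs <;> rcases hs' with hs' | hs'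
        · exact ihl hndl s hs s' hs' hint
        · exfalso
          obtain ⟨a, ha⟩ := hint
          rw [Finset.mem_inter] at ha
          exact (Finset.disjoint_left.mp hdisj)
            (leaves_subset_of_mem_subtrees hs ha.1)
            (leaves_subset_of_mem_subtrees hs' ha.2)
        · exfalso
          obtain ⟨a, ha⟩ := hint
          rw [Finset.mem_inter] at ha
          exact (Finset.disjoint_left.mp hdisj)
            (leaves_subset_of_mem_subtrees hs' ha.2)
            (leaves_subset_of_mem_subtrees hs ha.1)
        · exact ihr hndr s hs s' hs' hint

lemma internalVertices_node (l r : PhyloTree) :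
    (node l r).internalVertices = insert (node l r) (l.internalVertices ∪ r.internalVertices) := by
  classical
  rw [internalVertices, subtrees, Finset.filter_insert, if_pos (by simp [isInternal]),
    Finset.filter_union]
  rfl

lemma internalVertices_subset_subtrees (t : PhyloTree) : t.internalVertices ⊆ t.subtrees :=
  Finset.filter_subset _ _

lemma card_internalVertices {t : PhyloTree} (hnd : t.leafList.Nodup) :
    t.internalVertices.card + 1 = t.leafList.length := by
  induction t with
  | leaf i => rfl
  | node l r ihl ihr =>
    have hndl : l.leafList.Nodup := by
      rw [leafList, List.nodup_append] at hnd; exact hnd.1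
    have hndr : r.leafList.Nodup := by
      rw [leafList, List.nodup_append] at hnd; exact hnd.2.1
    have hdisj := disjoint_leaves_of_nodup hnd
    rw [internalVertices_node]
    have hnotmem : node l r ∉ l.internalVertices ∪ r.internalVertices := by
      rw [Finset.mem_union]
      rintro (h | h)
      · exact not_mem_subtrees_left (internalVertices_subset_subtrees l h)
      · exact not_mem_subtrees_right (internalVertices_subset_subtrees r h)
    have hdisj2 : Disjoint l.internalVertices r.internalVertices := by
      rw [Finset.disjoint_left]
      intro s hsl hsr
      obtain ⟨a, ha⟩ := leaves_nonempty s
      exact (Finset.disjoint_left.mp hdisj)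
        (leaves_subset_of_mem_subtrees (internalVertices_subset_subtrees l hsl) ha)
        (leaves_subset_of_mem_subtrees (internalVertices_subset_subtrees r hsr) ha)
    have hl1 := ihl hndl
    have hr1 := ihr hndr
    rw [Finset.card_insert_of_notMem hnotmem, Finset.card_union_of_disjoint hdisj2,
      leafList, List.length_append]
    omega

lemma topSet_subset_internalVertices (t : PhyloTree) (x : Finset ℕ) :
    t.topSet x ⊆ t.internalVertices := by
  intro s hs
  rw [topSet, Finset.mem_filter] at hs
  rw [internalVertices, Finset.mem_filter]
  refine ⟨hs.1, ?_⟩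
  cases s with
  | leaf i => simp [isTopOf] at hs
  | node l r => simp [isInternal]

lemma topSet_empty (t : PhyloTree) : t.topSet ∅ = ∅ := by
  rw [topSet, Finset.filter_eq_empty_iff]
  intro s _
  cases s with
  | leaf i => simp [isTopOf]
  | node l r => simp [isTopOf, Nat.odd_iff]

lemma topSet_pair {t : PhyloTree} (hnd : t.leafList.Nodup) {l r : PhyloTree}
    (hmem : node l r ∈ t.subtrees) {a b : ℕ} (ha : a ∈ l.leaves) (hb : b ∈ r.leaves) :
    t.topSet {a, b} = {node l r} := by
  classical
  have hndv : (node l r).leafList.Nodup := nodup_of_mem_subtrees hnd hmem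
  have hdisj := disjoint_leaves_of_nodup hndv
  have hab : a ≠ b := by
    intro h
    subst h
    exact (Finset.disjoint_left.mp hdisj) ha hb
  have hcardx : ({a, b} : Finset ℕ).card = 2 := Finset.card_pair hab
  apply Finset.ext
  intro s
  rw [topSet, Finset.mem_filter, Finset.mem_singleton]
  constructor
  · rintro ⟨hssub, htop⟩
    cases s with
    | leaf i => simp [isTopOf] at htop
    | node l' r' =>
      rw [isTopOf, Bool.and_eq_true, decide_eq_true_eq, decide_eq_true_eq] at htop
      obtain ⟨h1, h2⟩ := htop
      -- each intersection has exactly one element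
      have hc1 : (({a, b} : Finset ℕ) ∩ l'.leaves).card = 1 := by
        have hle : (({a, b} : Finset ℕ) ∩ l'.leaves).card ≤ 2 := by
          rw [← hcardx]
          exact Finset.card_le_card (Finset.inter_subset_left)
        rcases h1 with ⟨k, hk⟩
        omega
      have hc2 : (({a, b} : Finset ℕ) ∩ r'.leaves).card = 1 := by
        have hle : (({a, b} : Finset ℕ) ∩ r'.leaves).card ≤ 2 := by
          rw [← hcardx]
          exact Finset.card_le_card (Finset.inter_subset_left)
        rcases h2 with ⟨k, hk⟩
        omega
      obtain ⟨c, hc⟩ := Finset.card_eq_one.mp hc1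
      obtain ⟨d, hd⟩ := Finset.card_eq_one.mp hc2
      have hcmem : c ∈ ({a, b} : Finset ℕ) ∩ l'.leaves := by rw [hc]; exact Finset.mem_singleton_self c
      have hdmem : d ∈ ({a, b} : Finset ℕ) ∩ r'.leaves := by rw [hd]; exact Finset.mem_singleton_self d
      rw [Finset.mem_inter] at hcmem hdmem
      have hndv' : (node l' r').leafList.Nodup := nodup_of_mem_subtrees hnd hssub
      have hdisj' := disjoint_leaves_of_nodup hndv'
      have hcd : c ≠ d := by
        intro h
        subst h
        exact (Finset.disjoint_left.mp hdisj') hcmem.2 hdmem.2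
      -- {c, d} = {a, b}
      have habs : a ∈ (node l' r').leaves ∧ b ∈ (node l' r').leaves := by
        have hca := hcmem.1
        have hdb := hdmem.1
        rw [Finset.mem_insert, Finset.mem_singleton] at hca hdb
        have hcl : c ∈ (node l' r').leaves := by
          rw [leaves, Finset.mem_union]; exact Or.inl hcmem.2
        have hdl : d ∈ (node l' r').leaves := by
          rw [leaves, Finset.mem_union]; exact Or.inr hdmem.2
        rcases hca with rfl | rfl <;> rcases hdb with rfl | rfl
        · exact absurd rfl hcd
        · exact ⟨hcl, hdl⟩
        · exact ⟨hdl, hcl⟩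
        · exact absurd rfl hcd
      -- laminar comparison with node l r
      have haa : a ∈ (node l r).leaves := by
        rw [leaves, Finset.mem_union]; exact Or.inl ha
      have hbb : b ∈ (node l r).leaves := by
        rw [leaves, Finset.mem_union]; exact Or.inr hb
      have hint : ((node l' r').leaves ∩ (node l r).leaves).Nonempty :=
        ⟨a, Finset.mem_inter.mpr ⟨habs.1, haa⟩⟩
      rcases laminar t hnd _ hssub _ hmem hint with hcase | hcase
      · -- node l' r' ∈ (node l r).subtrees
        rw [subtrees, Finset.mem_insert, Finset.mem_union] at hcase
        rcases hcase with heq | hcase | hcase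
        · exact heq
        · exfalso
          have : b ∈ l.leaves := leaves_subset_of_mem_subtrees hcase habs.2
          exact (Finset.disjoint_left.mp hdisj) this hb
        · exfalso
          have : a ∈ r.leaves := leaves_subset_of_mem_subtrees hcase habs.1
          exact (Finset.disjoint_right.mp hdisj) this ha
      · -- node l r ∈ (node l' r').subtrees
        rw [subtrees, Finset.mem_insert, Finset.mem_union] at hcase
        rcases hcase with heq | hcase | hcase
        · exact heq.symm
        · -- node l r ∈ l'.subtrees : both a b in l'.leaves, but d ∈ r'.leaves and d ∈ {a,b}
          exfalso
          have hsub : (node l r).leaves ⊆ l'.leaves := leaves_subset_of_mem_subtrees hcase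
          have hdab := hdmem.1
          rw [Finset.mem_insert, Finset.mem_singleton] at hdab
          have : d ∈ l'.leaves := by
            rcases hdab with rfl | rfl
            · exact hsub haa
            · exact hsub hbb
          exact (Finset.disjoint_left.mp hdisj') this hdmem.2
        · exfalso
          have hsub : (node l r).leaves ⊆ r'.leaves := leaves_subset_of_mem_subtrees hcase
          have hcab := hcmem.1
          rw [Finset.mem_insert, Finset.mem_singleton] at hcab
          have : c ∈ r'.leaves := by
            rcases hcab with rfl | rfl
            · exact hsub haa
            · exact hsub hbb
          exact (Finset.disjoint_right.mp hdisj') this hcmem.2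
  · rintro rfl
    refine ⟨hmem, ?_⟩
    rw [isTopOf, Bool.and_eq_true, decide_eq_true_eq, decide_eq_true_eq]
    have hl : ({a, b} : Finset ℕ) ∩ l.leaves = {a} := by
      apply Finset.ext
      intro c
      simp only [Finset.mem_inter, Finset.mem_insert, Finset.mem_singleton]
      constructor
      · rintro ⟨rfl | rfl, hcl⟩
        · rfl
        · exact absurd hcl (Finset.disjoint_right.mp hdisj hb)
      · rintro rfl
        exact ⟨Or.inl rfl, ha⟩
    have hr : ({a, b} : Finset ℕ) ∩ r.leaves = {b} := by
      apply Finset.ext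
      intro c
      simp only [Finset.mem_inter, Finset.mem_insert, Finset.mem_singleton]
      constructor
      · rintro ⟨rfl | rfl, hcl⟩
        · exact absurd hcl (Finset.disjoint_left.mp hdisj ha)
        · rfl
      · rintro rfl
        exact ⟨Or.inr rfl, hb⟩
    rw [hl, hr]
    simp

end PhyloTree


open MvPolynomial

set_option maxHeartbeats 1000000 in
/-- Any `n+1` polynomials in `n` variables are algebraically dependent (Perron-style counting). -/
lemma exists_annihilator_fin {σ : Type*} [Fintype σ] [DecidableEq σ] {n : ℕ}
    (hcardσ : Fintype.card σ = n) (w : Fin (n + 1) → MvPolynomial σ ℂ) :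
    ∃ Q : MvPolynomial (Fin (n + 1)) ℂ, Q ≠ 0 ∧ aeval w Q = 0 := by
  classical
  set D : ℕ := Finset.univ.sup (fun i => (w i).totalDegree) with hD
  have hDle : ∀ i, (w i).totalDegree ≤ D :=
    fun i => Finset.le_sup (f := fun i => (w i).totalDegree) (Finset.mem_univ i)
  set M : ℕ := ((n + 1) * D + 1) ^ n with hM
  have hM1 : 1 ≤ M := Nat.one_le_pow _ _ (Nat.succ_le_succ (Nat.zero_le _))
  set E : ℕ := (n + 1) * M * D with hE
  set S : Finset (Fin (n + 1) →₀ ℕ) :=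
    (Fintype.piFinset fun _ : Fin (n + 1) => Finset.range (M + 1)).image
      Finsupp.equivFunOnFinite.symm with hS
  set T : Finset (σ →₀ ℕ) :=
    (Fintype.piFinset fun _ : σ => Finset.range (E + 1)).image
      Finsupp.equivFunOnFinite.symm with hT
  have hmemS : ∀ β : Fin (n + 1) →₀ ℕ, β ∈ S ↔ ∀ j, β j ≤ M := by
    intro β
    simp only [hS, Finset.mem_image, Fintype.mem_piFinset, Finset.mem_range]
    constructor
    · rintro ⟨f, hf, rfl⟩ j
      have := hf j
      have hfj : (Finsupp.equivFunOnFinite.symm f) j = f j := rfl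
      omega
    · intro h
      refine ⟨β, fun j => Nat.lt_succ_of_le (h j), ?_⟩
      simp
  have hmemT : ∀ β : σ →₀ ℕ, β ∈ T ↔ ∀ j, β j ≤ E := by
    intro β
    simp only [hT, Finset.mem_image, Fintype.mem_piFinset, Finset.mem_range]
    constructor
    · rintro ⟨f, hf, rfl⟩ j
      have := hf j
      have hfj : (Finsupp.equivFunOnFinite.symm f) j = f j := rfl
      omega
    · intro h
      refine ⟨β, fun j => Nat.lt_succ_of_le (h j), ?_⟩
      simp
  have hcardS : S.card = (M + 1) ^ (n + 1) := by
    rw [hS, Finset.card_image_of_injective _ (Equiv.injective _)]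
    simp [Fintype.card_piFinset]
  have hcardT : T.card = (E + 1) ^ n := by
    rw [hT, Finset.card_image_of_injective _ (Equiv.injective _)]
    rw [Fintype.card_piFinset]
    simp [hcardσ]
  have hcard : T.card < S.card := by
    rw [hcardS, hcardT]
    calc (E + 1) ^ n ≤ (M * ((n + 1) * D + 1)) ^ n := by
          apply Nat.pow_le_pow_left
          rw [hE]
          calc (n+1) * M * D + 1 ≤ M * ((n+1)*D) + M := by nlinarith
          _ = M * ((n+1)*D+1) := by ring
      _ = M ^ n * M := by rw [mul_pow, ← hM]
      _ = M ^ (n+1) := by ring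
      _ < (M + 1) ^ (n + 1) := Nat.pow_lt_pow_left (Nat.lt_succ_self M) (Nat.succ_ne_zero n)
  -- the linear map from coefficient vectors to coefficient vectors
  let L1 : (↥S → ℂ) →ₗ[ℂ] MvPolynomial (Fin (n + 1)) ℂ :=
    ∑ a : ↥S, (monomial (a : Fin (n + 1) →₀ ℕ)).comp (LinearMap.proj a)
  have hL1 : ∀ c, L1 c = ∑ a : ↥S, monomial (a : Fin (n + 1) →₀ ℕ) (c a) := by
    intro c
    simp [L1, LinearMap.sum_apply]
  let L2 : MvPolynomial (Fin (n + 1)) ℂ →ₗ[ℂ] MvPolynomial σ ℂ := (aeval w).toLinearMap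
  let L3 : MvPolynomial σ ℂ →ₗ[ℂ] (↥T → ℂ) :=
    LinearMap.pi (fun b => lcoeff ℂ (b : σ →₀ ℕ))
  let Φ : (↥S → ℂ) →ₗ[ℂ] (↥T → ℂ) := L3 ∘ₗ L2 ∘ₗ L1
  have hΦnotinj : ¬ Function.Injective Φ := by
    intro hinj
    have := LinearMap.finrank_le_finrank_of_injective hinj
    rw [Module.finrank_pi ℂ, Module.finrank_pi ℂ, Fintype.card_coe, Fintype.card_coe] at this
    omega
  rw [Function.not_injective_iff] at hΦnotinj
  obtain ⟨c1, c2, hc12, hne⟩ := hΦnotinj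
  set c := c1 - c2 with hc
  have hcne : c ≠ 0 := sub_ne_zero.mpr hne
  have hΦc : Φ c = 0 := by rw [hc, map_sub, hc12, sub_self]
  refine ⟨L1 c, ?_, ?_⟩
  · -- L1 c ≠ 0
    intro h0
    apply hcne
    funext a
    have : coeff (a : Fin (n + 1) →₀ ℕ) (L1 c) = c a := by
      rw [hL1, coeff_sum]
      rw [Finset.sum_eq_single a]
      · simp [coeff_monomial]
      · intro b _ hba
        rw [coeff_monomial, if_neg]
        exact fun h => hba (Subtype.ext h)
      · simp
    rw [h0] at this
    simp only [coeff_zero] at this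
    exact this.symm
  · -- aeval w (L1 c) = 0
    have hdegterm : ∀ a : ↥S, (aeval w (monomial (↑a : Fin (n+1) →₀ ℕ) (c a))).totalDegree ≤ E := by
      intro a
      rw [aeval_monomial]
      apply (totalDegree_mul _ _).trans
      have h1 : (algebraMap ℂ (MvPolynomial σ ℂ) (c a)).totalDegree = 0 := totalDegree_C _
      have h2 : (((↑a : Fin (n+1) →₀ ℕ)).prod fun j e => w j ^ e).totalDegree ≤ E := by
        rw [Finsupp.prod]
        apply (totalDegree_finset_prod _ _).trans
        calc ∑ j ∈ (↑a : Fin (n+1) →₀ ℕ).support, (w j ^ (↑a : Fin (n+1) →₀ ℕ) j).totalDegree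
            ≤ ∑ _j ∈ (↑a : Fin (n+1) →₀ ℕ).support, M * D := by
              apply Finset.sum_le_sum
              intro j _
              apply (totalDegree_pow _ _).trans
              exact Nat.mul_le_mul ((hmemS _).mp a.2 j) (hDle j)
          _ ≤ (n + 1) * (M * D) := by
              rw [Finset.sum_const, smul_eq_mul]
              apply Nat.mul_le_mul_right
              calc (↑a : Fin (n+1) →₀ ℕ).support.card ≤ (Finset.univ : Finset (Fin (n+1))).card :=
                    Finset.card_le_card (Finset.subset_univ _)
                _ = n + 1 := by simp
          _ = E := by rw [hE]; ring
      omega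
    have hdeg : (aeval w (L1 c)).totalDegree ≤ E := by
      rw [hL1, map_sum]
      apply (totalDegree_finset_sum _ _).trans
      apply Finset.sup_le
      intro a _
      exact hdegterm a
    apply MvPolynomial.ext
    intro β
    rw [coeff_zero]
    by_cases hβ : β ∈ T
    · have h := congrFun hΦc ⟨β, hβ⟩
      have h2 : Φ c ⟨β, hβ⟩ = coeff β (aeval w (L1 c)) := by
        simp only [Φ, LinearMap.comp_apply, L3, LinearMap.pi_apply, L2,
          AlgHom.toLinearMap_apply, lcoeff_apply]
      rw [h2] at h
      simpa using h
    · apply coeff_eq_zero_of_totalDegree_lt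
      rw [hmemT] at hβ
      push_neg at hβ
      obtain ⟨j, hj⟩ := hβ
      calc (aeval w (L1 c)).totalDegree ≤ E := hdeg
        _ < β j := hj
        _ ≤ ∑ i ∈ β.support, β i := by
            apply Finset.single_le_sum (f := fun i => β i) (fun _ _ => Nat.zero_le _)
            rw [Finsupp.mem_support_iff]
            omega

set_option maxHeartbeats 1000000 in
/-- Any `n+1` polynomials supported on a set of `n` variables are algebraically dependent. -/
lemma exists_annihilator {τ : Type*} {n : ℕ} (V : Finset τ) (hV : V.card = n)
    (y : Fin (n + 1) → MvPolynomial τ ℂ) (hy : ∀ i, y i ∈ supported ℂ (V : Set τ)) :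
    ∃ Q : MvPolynomial (Fin (n + 1)) ℂ, Q ≠ 0 ∧ aeval y Q = 0 := by
  classical
  have hy' : ∀ i, ∃ u : MvPolynomial ((V : Set τ) : Type _) ℂ,
      rename (Subtype.val : ((V : Set τ) : Type _) → τ) u = y i := by
    intro i
    have := hy i
    rw [supported_eq_range_rename] at this
    obtain ⟨u, hu⟩ := this
    exact ⟨u, hu⟩
  choose w hu using hy'
  have hcard : Fintype.card ((V : Set τ) : Type _) = n := by
    rw [← hV]; exact Fintype.card_coe V
  obtain ⟨Q, hQ, hQ0⟩ := exists_annihilator_fin hcard w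
  refine ⟨Q, hQ, ?_⟩
  have h1 : y = fun i => rename (Subtype.val : ((V : Set τ) : Type _) → τ) (w i) :=
    funext fun i => (hu i).symm
  rw [h1, ← comp_aeval_apply, hQ0, map_zero]


open MvPolynomial in
lemma cl_no_chain {A : Type*} [CommRing A] [Algebra ℂ A] {m : ℕ}
    (p : Fin (m + 1) → Ideal A) (hp : ∀ i, (p i).IsPrime) (hmono : Monotone p)
    (x : Fin m → A) (hx1 : ∀ i, x i ∈ p i.succ) (hx2 : ∀ i, x i ∉ p i.castSucc)
    (Q : MvPolynomial (Fin m) ℂ) (hQ : Q ≠ 0) (hev : aeval x Q = 0) : False := by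
  classical
  have hsupp : Q.support.Nonempty := by
    rw [Finset.nonempty_iff_ne_empty]
    simpa [MvPolynomial.support_eq_empty] using hQ
  obtain ⟨α, hαmem, hαmin⟩ :=
    Finset.exists_min_image Q.support (fun β => toLex (β : Fin m →₀ ℕ)) hsupp
  -- the nested partial sums
  set N : ℕ → A := fun i =>
    ∑ β ∈ Q.support.filter (fun β => ∀ j : Fin m, (j : ℕ) < i → β j = α j),
      algebraMap ℂ A (Q.coeff β) * ∏ j : Fin m, (if i ≤ (j : ℕ) then x j ^ β j else 1)
    with hN
  have hNm : N m = algebraMap ℂ A (Q.coeff α) := by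
    have hfilter : Q.support.filter (fun β => ∀ j : Fin m, (j : ℕ) < m → β j = α j) = {α} := by
      apply Finset.ext
      intro β
      simp only [Finset.mem_filter, Finset.mem_singleton]
      constructor
      · rintro ⟨hβ, h⟩
        ext j
        exact h j j.isLt
      · rintro rfl
        exact ⟨hαmem, fun _ _ => rfl⟩
    rw [hN]
    simp only [hfilter, Finset.sum_singleton]
    have : ∀ j : Fin m, (if m ≤ (j : ℕ) then x j ^ α j else 1) = 1 := by
      intro j
      simp [Nat.not_le.mpr j.isLt]
    rw [Finset.prod_congr rfl (fun j _ => this j), Finset.prod_const_one, mul_one]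
  have hN0 : N 0 = aeval x Q := by
    simp only [hN]
    rw [Finset.filter_true_of_mem (fun β _ => fun (j : Fin m) hj => absurd hj (Nat.not_lt_zero _))]
    conv_rhs => rw [Q.as_sum, map_sum]
    apply Finset.sum_congr rfl
    intro β _
    rw [aeval_monomial]
    congr 1
    rw [Finsupp.prod]
    rw [Finset.prod_subset (Finset.subset_univ β.support)]
    · apply Finset.prod_congr rfl
      intro j _
      simp
    · intro j _ hj
      simp only [Finsupp.notMem_support_iff] at hj
      simp [hj]
  -- key step
  have hstep : ∀ i : Fin m, ∃ s : A,
      N (i : ℕ) = x i ^ α i * (N ((i : ℕ) + 1) + x i * s) := by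
    intro i
    classical
    set Fi := Q.support.filter (fun β => ∀ j : Fin m, (j : ℕ) < (i : ℕ) → β j = α j) with hFi
    have hsplitset :
        Fi.filter (fun β => β i = α i)
          = Q.support.filter (fun β => ∀ j : Fin m, (j : ℕ) < (i : ℕ) + 1 → β j = α j) := by
      apply Finset.ext
      intro β
      simp only [hFi, Finset.mem_filter, and_assoc]
      constructor
      · rintro ⟨h1, h2, h3⟩
        refine ⟨h1, fun j hj => ?_⟩
        rcases Nat.lt_succ_iff_lt_or_eq.mp hj with h | h
        · exact h2 j h
        · have : j = i := Fin.ext h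
          subst this; exact h3
      · rintro ⟨h1, h2⟩
        exact ⟨h1, fun j hj => h2 j (Nat.lt_succ_of_lt hj), h2 i (Nat.lt_succ_self _)⟩
    have hgt : ∀ β ∈ Fi, β i ≠ α i → α i < β i := by
      intro β hβ hne
      rcases lt_trichotomy (β i) (α i) with h | h | h
      · exfalso
        have hmem : β ∈ Q.support := (Finset.mem_filter.mp hβ).1
        have hagree := (Finset.mem_filter.mp hβ).2
        have hlt : toLex (β : Fin m →₀ ℕ) < toLex (α : Fin m →₀ ℕ) := by
          rw [Finsupp.Lex.lt_iff]
          exact ⟨i, fun j hj => hagree j hj, h⟩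
        exact absurd (hαmin β hmem) (not_le.mpr hlt)
      · exact absurd h hne
      · exact h
    -- factor one variable out of the product
    have hprodfac : ∀ β : Fin m →₀ ℕ,
        (∏ j : Fin m, (if (i : ℕ) ≤ (j : ℕ) then x j ^ β j else 1))
          = x i ^ β i * ∏ j : Fin m, (if (i : ℕ) + 1 ≤ (j : ℕ) then x j ^ β j else 1) := by
      intro β
      rw [← Finset.mul_prod_erase Finset.univ _ (Finset.mem_univ i),
          ← Finset.mul_prod_erase Finset.univ
            (fun j : Fin m => if (i : ℕ) + 1 ≤ (j : ℕ) then x j ^ β j else 1) (Finset.mem_univ i)]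
      simp only [le_refl, if_true, Nat.not_succ_le_self, if_false, one_mul]
      congr 1
      apply Finset.prod_congr rfl
      intro j hj
      have hji : j ≠ i := (Finset.mem_erase.mp hj).1
      have : ((i : ℕ) ≤ (j : ℕ)) ↔ ((i : ℕ) + 1 ≤ (j : ℕ)) := by
        constructor
        · intro h
          rcases h.lt_or_eq with h | h
          · exact h
          · exact absurd (Fin.ext h.symm) hji
        · omega
      by_cases hc : (i : ℕ) + 1 ≤ (j : ℕ)
      · rw [if_pos hc, if_pos (this.mpr hc)]
      · rw [if_neg hc, if_neg (fun hh => hc (this.mp hh))]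
    have hsum := Finset.sum_filter_add_sum_filter_not Fi (fun β => β i = α i)
      (fun β => algebraMap ℂ A (Q.coeff β) * ∏ j : Fin m, (if (i : ℕ) ≤ (j : ℕ) then x j ^ β j else 1))
    refine ⟨(∑ β ∈ Fi.filter (fun β => ¬ β i = α i),
      algebraMap ℂ A (Q.coeff β) * (x i ^ (β i - (α i + 1)) *
        ∏ j : Fin m, (if (i : ℕ) + 1 ≤ (j : ℕ) then x j ^ β j else 1))), ?_⟩
    simp only [hN]
    rw [← hFi, ← hsum]
    have h1 : ∑ β ∈ Fi.filter (fun β => β i = α i),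
        algebraMap ℂ A (Q.coeff β) * ∏ j : Fin m, (if (i : ℕ) ≤ (j : ℕ) then x j ^ β j else 1)
        = x i ^ α i * N ((i : ℕ) + 1) := by
      simp only [hN]
      rw [← hsplitset, Finset.mul_sum]
      apply Finset.sum_congr rfl
      intro β hβ
      have hβi : β i = α i := (Finset.mem_filter.mp hβ).2
      rw [hprodfac β, hβi]
      ring
    have h2 : ∑ β ∈ Fi.filter (fun β => ¬ β i = α i),
        algebraMap ℂ A (Q.coeff β) * ∏ j : Fin m, (if (i : ℕ) ≤ (j : ℕ) then x j ^ β j else 1)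
        = x i ^ α i * (x i * ∑ β ∈ Fi.filter (fun β => ¬ β i = α i),
            algebraMap ℂ A (Q.coeff β) * (x i ^ (β i - (α i + 1)) *
              ∏ j : Fin m, (if (i : ℕ) + 1 ≤ (j : ℕ) then x j ^ β j else 1))) := by
      rw [Finset.mul_sum, Finset.mul_sum]
      apply Finset.sum_congr rfl
      intro β hβ
      have hmem : β ∈ Fi := (Finset.mem_filter.mp hβ).1
      have hne : ¬ β i = α i := (Finset.mem_filter.mp hβ).2
      have hlt := hgt β hmem hne
      have hpow : x i ^ β i = x i ^ α i * (x i * x i ^ (β i - (α i + 1))) := by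
        rw [← pow_succ' (x i) , ← pow_add]
        congr 1
        omega
      rw [hprodfac β, hpow]
      ring
    rw [h1, h2]
    ring
  -- downward induction
  have key : ∀ i : Fin (m + 1), N (i : ℕ) ∉ p i := by
    intro i
    induction i using Fin.reverseInduction with
    | last =>
      simp only [Fin.val_last]
      rw [hNm]
      intro hmem
      have hc : Q.coeff α ≠ 0 := MvPolynomial.mem_support_iff.mp hαmem
      have : IsUnit (algebraMap ℂ A (Q.coeff α)) := (IsUnit.mk0 _ hc).map (algebraMap ℂ A)
      exact (hp (Fin.last m)).ne_top (Ideal.eq_top_of_isUnit_mem _ hmem this)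
    | cast i ih =>
      obtain ⟨s, hs⟩ := hstep i
      have hcv : ((i.castSucc : Fin (m+1)) : ℕ) = (i : ℕ) := rfl
      have hsv : ((i.succ : Fin (m+1)) : ℕ) = (i : ℕ) + 1 := rfl
      rw [hcv, hs]
      intro hmem
      rcases (hp i.castSucc).mem_or_mem hmem with h | h
      · exact hx2 i ((hp i.castSucc).mem_of_pow_mem _ h)
      · have hle : p i.castSucc ≤ p i.succ := hmono (Fin.castSucc_le_succ i)
        have h' : N ((i : ℕ) + 1) + x i * s ∈ p i.succ := hle h
        have : N ((i : ℕ) + 1) ∈ p i.succ := by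
          have hxs : x i * s ∈ p i.succ := Ideal.mul_mem_right _ _ (hx1 i)
          simpa using Ideal.sub_mem _ h' hxs
        rw [← hsv] at this
        exact ih this
  have h0 := key 0
  rw [show ((0 : Fin (m+1)) : ℕ) = 0 from rfl, hN0, hev] at h0
  exact h0 (Ideal.zero_mem _)

open MvPolynomial

/-- The variables appearing in the image of `φ_T`. -/
noncomputable def varSet (t : PhyloTree) : Finset (Option PhyloTree) :=
  insert none (t.internalVertices.image some)

lemma phi_X (n : ℕ) (t : PhyloTree) (x : EvenSubsets n) :
    phiCFNMC n t (X x) = X none * ∏ s ∈ t.topSet x.toNat, X (some s) :=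
  aeval_X _ _

lemma phi_mem_supported (n : ℕ) (t : PhyloTree) (r : MvPolynomial (EvenSubsets n) ℂ) :
    phiCFNMC n t r ∈ supported ℂ ((varSet t : Finset (Option PhyloTree)) : Set (Option PhyloTree)) := by
  induction r using MvPolynomial.induction_on with
  | C a =>
    rw [show (C a : MvPolynomial (EvenSubsets n) ℂ) = algebraMap ℂ _ a from rfl, AlgHom.commutes]
    exact Subalgebra.algebraMap_mem _ a
  | add p q hp hq =>
    rw [map_add]; exact add_mem hp hq
  | mul_X p x hp =>
    rw [map_mul, phi_X]
    refine mul_mem hp (mul_mem ?_ ?_)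
    · exact X_mem_supported.mpr (by simp [varSet])
    · apply prod_mem
      intro s hs
      apply X_mem_supported.mpr
      simp only [varSet, Finset.coe_insert, Set.mem_insert_iff, Finset.coe_image,
        Set.mem_image, Finset.mem_coe]
      exact Or.inr ⟨s, PhyloTree.topSet_subset_internalVertices t _ hs, rfl⟩

lemma card_varSet {n : ℕ} {t : PhyloTree} (h : PhyloTree.IsPhylo n t) :
    (varSet t).card = n := by
  have hlen : t.leafList.length = n := by
    rw [← List.toFinset_card_of_nodup h.1, h.2, Finset.card_range]
  have hcardI : t.internalVertices.card + 1 = n := by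
    rw [PhyloTree.card_internalVertices h.1, hlen]
  rw [varSet, Finset.card_insert_of_notMem (by simp),
    Finset.card_image_of_injective _ (Option.some_injective _)]
  omega

set_option maxHeartbeats 1000000 in
lemma cfn_upper {n : ℕ} {t : PhyloTree} (h : PhyloTree.IsPhylo n t) :
    ringKrullDim (MvPolynomial (EvenSubsets n) ℂ ⧸ RingHom.ker (phiCFNMC n t))
      ≤ (n : WithBot (WithTop ℕ)) := by
  classical
  suffices hlen' : ∀ P : LTSeries (PrimeSpectrum
      (MvPolynomial (EvenSubsets n) ℂ ⧸ RingHom.ker (phiCFNMC n t))), P.length ≤ n by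
    rw [show ringKrullDim (MvPolynomial (EvenSubsets n) ℂ ⧸ RingHom.ker (phiCFNMC n t))
      = Order.krullDim (PrimeSpectrum (MvPolynomial (EvenSubsets n) ℂ ⧸ RingHom.ker (phiCFNMC n t)))
      from rfl, Order.krullDim]
    exact iSup_le fun P => by
      have := hlen' P
      exact (WithBot.coe_le_coe.mpr (Nat.cast_le.mpr this) : ((P.length : ℕ∞) : WithBot ℕ∞) ≤ ((n : ℕ∞) : WithBot ℕ∞))
  intro P
  by_contra hP
  push_neg at hP
  have hP' : n + 1 ≤ P.length := hP
  -- a chain of n+2 primes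
  set p : Fin (n + 2) → Ideal (MvPolynomial (EvenSubsets n) ℂ ⧸ RingHom.ker (phiCFNMC n t)) :=
    fun k => (P.toFun ⟨(k : ℕ), by omega⟩).asIdeal with hpdef
  have hp : ∀ i, (p i).IsPrime := fun i => (P.toFun _).isPrime
  have hmono : Monotone p := by
    intro i j hij
    rw [hpdef]
    exact (PrimeSpectrum.asIdeal_le_asIdeal _ _).mpr
      (P.monotone (by rw [Fin.mk_le_mk]; exact hij))
  have hstrict : ∀ i : Fin (n + 1), p i.castSucc < p i.succ := by
    intro i
    rw [hpdef]
    apply (PrimeSpectrum.asIdeal_lt_asIdeal _ _).mpr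
    apply P.strictMono
    rw [Fin.mk_lt_mk]
    simp [Fin.coe_castSucc, Fin.val_succ]
  choose x hx1 hx2 using fun i : Fin (n + 1) => SetLike.exists_of_lt (hstrict i)
  -- algebraic dependence of the x i
  set g := Ideal.kerLiftAlg (phiCFNMC n t) with hg
  have hginj := Ideal.kerLiftAlg_injective (phiCFNMC n t)
  have hgsupp : ∀ a, g a ∈ supported ℂ ((varSet t : Finset (Option PhyloTree)) : Set (Option PhyloTree)) := by
    intro a
    obtain ⟨r, rfl⟩ := Ideal.Quotient.mk_surjective a
    rw [hg, Ideal.kerLiftAlg_mk]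
    exact phi_mem_supported n t r
  obtain ⟨Q, hQne, hQev⟩ := exists_annihilator (varSet t) (card_varSet h)
    (fun i => g (x i)) (fun i => hgsupp (x i))
  have hxev : aeval x Q = 0 := by
    apply hginj
    rw [comp_aeval_apply, map_zero]
    exact hQev
  exact cl_no_chain p hp hmono x hx1 hx2 Q hQne hxev

/-- Setting to zero the variables outside `F`. -/
noncomputable def killMap (F : Finset (Option PhyloTree)) :
    MvPolynomial (Option PhyloTree) ℂ →ₐ[ℂ] MvPolynomial (Option PhyloTree) ℂ :=
  aeval (fun v => if v ∈ F then X v else 0)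

lemma killMap_X (F : Finset (Option PhyloTree)) (v : Option PhyloTree) :
    killMap F (X v) = if v ∈ F then X v else 0 :=
  aeval_X _ _

lemma killMap_comp {F F' : Finset (Option PhyloTree)} (h : F ⊆ F') :
    (killMap F).comp (killMap F') = killMap F := by
  apply MvPolynomial.algHom_ext
  intro v
  simp only [AlgHom.comp_apply, killMap, aeval_X]
  by_cases hv : v ∈ F'
  · rw [if_pos hv, aeval_X]
  · rw [if_neg hv, map_zero, if_neg (fun hvF => hv (h hvF))]

set_option maxHeartbeats 1000000 in
lemma cfn_lower {n : ℕ} {t : PhyloTree} (h : PhyloTree.IsPhylo n t) :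
    (n : WithBot (WithTop ℕ)) ≤
      ringKrullDim (MvPolynomial (EvenSubsets n) ℂ ⧸ RingHom.ker (phiCFNMC n t)) := by
  classical
  have hlen : t.leafList.length = n := by
    rw [← List.toFinset_card_of_nodup h.1, h.2, Finset.card_range]
  have hcardI : t.internalVertices.card + 1 = n := by
    rw [PhyloTree.card_internalVertices h.1, hlen]
  set L := t.internalVertices.toList with hL
  have hLlen : L.length + 1 = n := by rw [hL, Finset.length_toList]; exact hcardI
  have hLnd : L.Nodup := Finset.nodup_toList _
  set F : ℕ → Finset (Option PhyloTree) := fun k =>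
    match k with
    | 0 => ∅
    | k + 1 => insert none ((L.take k).toFinset.image some) with hF
  set ψ : ℕ → (MvPolynomial (EvenSubsets n) ℂ →ₐ[ℂ] MvPolynomial (Option PhyloTree) ℂ) :=
    fun k => (killMap (F k)).comp (phiCFNMC n t) with hψ
  have hFmono : ∀ k, F k ⊆ F (k + 1) := by
    intro k
    match k with
    | 0 => exact Finset.empty_subset _
    | k + 1 =>
      apply Finset.insert_subset_insert
      apply Finset.image_subset_image
      intro v hv
      rw [List.mem_toFinset] at *
      have hsub : (L.take k).Sublist (L.take (k + 1)) := by
        have := List.take_sublist k (L.take (k + 1))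
        rwa [List.take_take, min_eq_left (Nat.le_succ k)] at this
      exact hsub.subset hv
  have hkerle : ∀ k, RingHom.ker (ψ (k + 1)) ≤ RingHom.ker (ψ k) := by
    intro k r hr
    rw [RingHom.mem_ker] at hr ⊢
    have hcomp : ψ k r = killMap (F k) (ψ (k + 1) r) := by
      rw [hψ]
      simp only [AlgHom.comp_apply]
      rw [← AlgHom.comp_apply (killMap (F k)) (killMap (F (k + 1))), killMap_comp (hFmono k)]
    rw [hcomp, hr, map_zero]
  -- witnesses for strictness
  have hwit : ∀ j, j < n → ∃ w, ψ j w = 0 ∧ ψ (j + 1) w ≠ 0 := by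
    intro j hj
    match j with
    | 0 =>
      refine ⟨X ⟨∅, by simp⟩, ?_, ?_⟩
      · rw [hψ]
        simp only [AlgHom.comp_apply, phi_X]
        have htop : t.topSet (EvenSubsets.toNat (⟨∅, by simp⟩ : EvenSubsets n)) = ∅ := by
          rw [show EvenSubsets.toNat (⟨∅, by simp⟩ : EvenSubsets n) = (∅ : Finset ℕ) by
            simp [EvenSubsets.toNat]]
          exact PhyloTree.topSet_empty t
        rw [htop, Finset.prod_empty, mul_one, killMap_X, if_neg (Finset.notMem_empty _)]
      · rw [hψ]
        simp only [AlgHom.comp_apply, phi_X]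
        have htop : t.topSet (EvenSubsets.toNat (⟨∅, by simp⟩ : EvenSubsets n)) = ∅ := by
          rw [show EvenSubsets.toNat (⟨∅, by simp⟩ : EvenSubsets n) = (∅ : Finset ℕ) by
            simp [EvenSubsets.toNat]]
          exact PhyloTree.topSet_empty t
        rw [htop, Finset.prod_empty, mul_one, killMap_X,
          if_pos (Finset.mem_insert_self _ _)]
        exact X_ne_zero _
    | i + 1 =>
      have hi : i < L.length := by omega
      set v := L.get ⟨i, hi⟩ with hv
      have hvL : v ∈ L := by
        rw [hv]
        exact List.get_mem L ⟨i, hi⟩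
      have hvmem : v ∈ t.internalVertices := by
        rw [hL] at hvL
        exact Finset.mem_toList.mp hvL
      have hvsub : v ∈ t.subtrees := PhyloTree.internalVertices_subset_subtrees t hvmem
      have hvint : v.isInternal = true := (Finset.mem_filter.mp hvmem).2
      -- v is a node
      obtain ⟨l, r, hvlr⟩ : ∃ l r, v = PhyloTree.node l r := by
        cases hveq : v with
        | leaf a => rw [hveq] at hvint; simp [PhyloTree.isInternal] at hvint
        | node l r => exact ⟨l, r, rfl⟩
      obtain ⟨a, ha⟩ := PhyloTree.leaves_nonempty l
      obtain ⟨b, hb⟩ := PhyloTree.leaves_nonempty r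
      have hndv : v.leafList.Nodup := PhyloTree.nodup_of_mem_subtrees h.1 hvsub
      have hdisj : Disjoint l.leaves r.leaves := by
        rw [hvlr] at hndv
        exact PhyloTree.disjoint_leaves_of_nodup hndv
      have hab : a ≠ b := fun hh => (Finset.disjoint_left.mp hdisj) ha (hh ▸ hb)
      have han : a < n := by
        have : a ∈ t.leaves := PhyloTree.leaves_subset_of_mem_subtrees hvsub
          (by rw [hvlr, PhyloTree.leaves, Finset.mem_union]; exact Or.inl ha)
        rw [PhyloTree.leaves_eq_toFinset, h.2, Finset.mem_range] at this
        exact this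
      have hbn : b < n := by
        have : b ∈ t.leaves := PhyloTree.leaves_subset_of_mem_subtrees hvsub
          (by rw [hvlr, PhyloTree.leaves, Finset.mem_union]; exact Or.inr hb)
        rw [PhyloTree.leaves_eq_toFinset, h.2, Finset.mem_range] at this
        exact this
      set xp : EvenSubsets n := pairIdx ⟨a, han⟩ ⟨b, hbn⟩
        (by simp only [ne_eq, Fin.mk.injEq]; exact hab) with hxp
      have htoNat : EvenSubsets.toNat xp = ({a, b} : Finset ℕ) := by
        rw [hxp, pairIdx, EvenSubsets.toNat]
        simp
      have htop : t.topSet (EvenSubsets.toNat xp) = {v} := by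
        rw [htoNat, hvlr]
        rw [hvlr] at hvsub
        exact PhyloTree.topSet_pair h.1 hvsub ha hb
      have hφX : phiCFNMC n t (X xp) = X none * X (some v) := by
        rw [phi_X, htop, Finset.prod_singleton]
      -- v is in take (i+1) but not in take i
      have hvtake1 : v ∈ L.take (i + 1) := by
        rw [List.take_succ]
        apply List.mem_append.mpr
        right
        rw [List.getElem?_eq_getElem hi]
        simp [hv, List.get_eq_getElem]
      have hvtake0 : v ∉ L.take i := by
        intro hmem
        have hnd2 : (L.take i ++ L.drop i).Nodup := by rw [List.take_append_drop]; exact hLnd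
        have hdisj2 := List.disjoint_of_nodup_append hnd2
        have hvdrop : v ∈ L.drop i := by
          have hdd : L.drop i = L[i] :: L.drop (i + 1) := List.drop_eq_getElem_cons hi
          rw [hv, List.get_eq_getElem, hdd]
          exact List.mem_cons_self
        exact hdisj2 hmem hvdrop
      refine ⟨X xp, ?_, ?_⟩
      · rw [hψ]
        simp only [AlgHom.comp_apply]
        rw [hφX, map_mul, killMap_X, killMap_X]
        rw [if_pos (Finset.mem_insert_self none _), if_neg ?hns, mul_zero]
        case hns =>
          simp only [hF]
          rw [Finset.mem_insert]
          rintro (hc | hc)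
          · exact absurd hc (Option.some_ne_none v)
          · rw [Finset.mem_image] at hc
            obtain ⟨u, hu1, hu2⟩ := hc
            rw [List.mem_toFinset] at hu1
            have : u = v := Option.some_injective _ hu2
            subst this
            exact hvtake0 hu1
      · rw [hψ]
        simp only [AlgHom.comp_apply]
        rw [hφX, map_mul, killMap_X, killMap_X]
        rw [if_pos (Finset.mem_insert_self _ _), if_pos ?hs]
        case hs =>
          simp only [hF]
          apply Finset.mem_insert_of_mem
          rw [Finset.mem_image]
          exact ⟨v, List.mem_toFinset.mpr hvtake1, rfl⟩
        exact mul_ne_zero (X_ne_zero _) (X_ne_zero _)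
  -- assemble the chain of primes
  set I := RingHom.ker (phiCFNMC n t) with hI
  have hIle : ∀ k, I ≤ RingHom.ker (ψ k) := by
    intro k r hr
    rw [hI, RingHom.mem_ker] at hr
    rw [RingHom.mem_ker, hψ]
    simp only [AlgHom.comp_apply]
    rw [hr, map_zero]
  set G : ℕ → Ideal (MvPolynomial (EvenSubsets n) ℂ) := fun k => RingHom.ker (ψ (n - k)) with hG
  have hdec : ∀ d j, RingHom.ker (ψ (j + d)) ≤ RingHom.ker (ψ j) := by
    intro d
    induction d with
    | zero => intro j; simp
    | succ d ih =>
      intro j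
      have h1 : j + (d + 1) = (j + d) + 1 := by omega
      rw [h1]
      exact (hkerle (j + d)).trans (ih j)
  have hGmono : ∀ k k' : ℕ, k ≤ k' → G k ≤ G k' := by
    intro k k' hkk'
    simp only [hG]
    have heq : n - k = (n - k') + ((n - k) - (n - k')) := by omega
    rw [heq]
    exact hdec _ _
  have hGstrict : ∀ k, k < n → G k < G (k + 1) := by
    intro k hk
    obtain ⟨w, hw0, hw1⟩ := hwit (n - (k + 1)) (by omega)
    have hj : n - k = (n - (k + 1)) + 1 := by omega
    rw [lt_iff_le_and_ne]
    refine ⟨hGmono k (k + 1) (by omega), ?_⟩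
    intro heq
    have hwin : w ∈ G (k + 1) := by simp only [hG]; exact RingHom.mem_ker.mpr hw0
    have hwout : w ∉ G k := by
      simp only [hG, hj]
      exact fun hmem => hw1 (RingHom.mem_ker.mp hmem)
    exact hwout (heq ▸ hwin)
  set π := Ideal.Quotient.mk I with hπ
  have hcomap : ∀ k, Ideal.comap π (Ideal.map π (G k)) = G k := by
    intro k
    rw [Ideal.comap_map_of_surjective π Ideal.Quotient.mk_surjective]
    have : Ideal.comap π ⊥ = I := by
      rw [← RingHom.ker_eq_comap_bot, hπ, Ideal.mk_ker]
    rw [this]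
    exact sup_eq_left.mpr (hIle _)
  have hprime : ∀ k : ℕ, (Ideal.map π (G k)).IsPrime := by
    intro k
    haveI : (G k).IsPrime := RingHom.ker_isPrime _
    have hker2 : RingHom.ker π ≤ G k := by
      rw [hπ, Ideal.mk_ker]
      exact hIle _
    exact Ideal.map_isPrime_of_surjective Ideal.Quotient.mk_surjective hker2
  set pt : Fin (n + 1) → PrimeSpectrum (MvPolynomial (EvenSubsets n) ℂ ⧸ I) :=
    fun k => ⟨Ideal.map π (G (k : ℕ)), hprime _⟩ with hpt
  have hstep : ∀ i : Fin n, pt i.castSucc < pt i.succ := by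
    intro i
    simp only [hpt]
    rw [← PrimeSpectrum.asIdeal_lt_asIdeal]
    have hlt := hGstrict (i : ℕ) i.isLt
    simp only [Fin.coe_castSucc, Fin.val_succ]
    rw [lt_iff_le_and_ne]
    refine ⟨Ideal.map_mono hlt.le, ?_⟩
    intro heq
    have h2 := congrArg (Ideal.comap π) heq
    rw [hcomap, hcomap] at h2
    exact hlt.ne h2
  have hser := Order.LTSeries.length_le_krullDim
    (⟨n, pt, hstep⟩ : LTSeries (PrimeSpectrum (MvPolynomial (EvenSubsets n) ℂ ⧸ I)))
  exact hser

/-- The Krull dimension of the CFN-MC toric variety `R/I_T` depends only on the number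
of leaves `n`, not on the topology of the rooted binary tree `T`. -/
theorem cfnIdeal_quotient_krullDim_eq
    (n : ℕ) (t1 t2 : PhyloTree)
    (h1 : PhyloTree.IsPhylo n t1) (h2 : PhyloTree.IsPhylo n t2) :
    ringKrullDim (MvPolynomial (EvenSubsets n) ℂ ⧸ cfnIdeal n t1) =
      ringKrullDim (MvPolynomial (EvenSubsets n) ℂ ⧸ cfnIdeal n t2) := by
  have e1 : cfnIdeal n t1 = RingHom.ker (phiCFNMC n t1) := rfl
  have e2 : cfnIdeal n t2 = RingHom.ker (phiCFNMC n t2) := rfl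
  rw [e1, e2, le_antisymm (cfn_upper h1) (cfn_lower h1),
    le_antisymm (cfn_upper h2) (cfn_lower h2)]
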